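/- Every body of constant width in ℍ^d is reduced: if W is a convex body of constant width and Z ⊊ W is a convex body properly contained in W, then Δ(Z) < Δ(W). -/

import Mathlib

noncomputable section

namespace HypSpace

/-- Inverse hyperbolic cosine. -/
def arcosh (x : ℝ) : ℝ := Real.log (x + Real.sqrt (x ^ 2 - 1))

/-- The Minkowski bilinear form on `ℝ^{d+1}` (signature `(d,1)`, the last
coordinate being timelike). -/
def mink (d : ℕ) (x y : EuclideanSpace ℝ (Fin (d + 1))) : ℝ :=
  (∑ i : Fin d, x i.castSucc * y i.castSucc) - x (Fin.last d) * y (Fin.last d)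

/-- The hyperboloid model of `d`-dimensional hyperbolic space: the upper sheet
of the two-sheeted hyperboloid `mink x x = -1`. -/
def Pt (d : ℕ) : Type := {x : EuclideanSpace ℝ (Fin (d + 1)) // mink d x x = -1 ∧ 0 < x (Fin.last d)}

variable {d : ℕ}

/-- Hyperbolic distance between two points of `ℍ^d`. -/
def hdist (p q : Pt d) : ℝ := arcosh (-(mink d p.1 q.1))

/-- The geodesic segment between `a` and `b`, described metrically via betweenness
(hyperbolic space is uniquely geodesic). -/
def seg (a b : Pt d) : Set (Pt d) := {p | hdist a p + hdist p b = hdist a b}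

/-- A set is (geodesically) convex if it contains the segment between any two of its points. -/
def IsConvexSet (C : Set (Pt d)) : Prop := ∀ a ∈ C, ∀ b ∈ C, seg a b ⊆ C

/-- The convex hull: the smallest convex set containing `A`. -/
def chull (A : Set (Pt d)) : Set (Pt d) := ⋂₀ {C | IsConvexSet C ∧ A ⊆ C}

/-- The totally geodesic hyperplane with (spacelike) normal vector `v`. -/
def plane (v : EuclideanSpace ℝ (Fin (d + 1))) : Set (Pt d) := {p | mink d v p.1 = 0}

/-- A hyperplane of `ℍ^d`: the trace on the hyperboloid of a linear hyperplane
with spacelike unit normal. -/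
def IsHyperplane (H : Set (Pt d)) : Prop := ∃ v, mink d v v = 1 ∧ H = plane v

/-- Distance from a point to a set. -/
def distPS (p : Pt d) (S : Set (Pt d)) : ℝ := sInf (hdist p '' S)

/-- Distance between two sets. -/
def distSS (A B : Set (Pt d)) : ℝ := sInf {r | ∃ a ∈ A, ∃ b ∈ B, hdist a b = r}

/-- `h` is the orthogonal projection of `g` onto `H`: the point of `H`
realizing the distance from `g` to `H`.  For a hyperplane `H` with `a ∈ H`,
`IsProj b H a` also expresses that `H` is orthogonal to the segment `ab` at `a`. -/
def IsProj (g : Pt d) (H : Set (Pt d)) (h : Pt d) : Prop :=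
  h ∈ H ∧ ∀ k ∈ H, hdist g h ≤ hdist g k

/-- Two hyperplanes are ultraparallel if they are disjoint and not asymptotically
parallel (their distance is positive, i.e. they admit a common perpendicular). -/
def Ultraparallel (H J : Set (Pt d)) : Prop :=
  IsHyperplane H ∧ IsHyperplane J ∧ H ∩ J = ∅ ∧ 0 < distSS H J

/-- `p` is an interior point of `C`. -/
def IsIntr (C : Set (Pt d)) (p : Pt d) : Prop := ∃ ε > 0, ∀ q, hdist p q < ε → q ∈ C

/-- `p` is a boundary point of the (closed) set `C`. -/
def IsBdry (C : Set (Pt d)) (p : Pt d) : Prop := p ∈ C ∧ ¬ IsIntr C p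

/-- `C` is bounded. -/
def IsBddSet (C : Set (Pt d)) : Prop := ∃ R, ∀ a ∈ C, ∀ b ∈ C, hdist a b ≤ R

/-- `C` is closed. -/
def IsClosedSet (C : Set (Pt d)) : Prop :=
  ∀ p : Pt d, (∀ ε > 0, ∃ q ∈ C, hdist p q < ε) → p ∈ C

/-- A convex body: a compact (closed and bounded) convex set with nonempty interior. -/
def IsBody (C : Set (Pt d)) : Prop :=
  IsConvexSet C ∧ IsBddSet C ∧ IsClosedSet C ∧ ∃ p, IsIntr C p

/-- The hyperplane `H` supports `C`: it meets `C` but misses its interior. -/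
def Supports (H C : Set (Pt d)) : Prop :=
  IsHyperplane H ∧ (H ∩ C).Nonempty ∧ ∀ p, IsIntr C p → p ∉ H

/-- The width of `C` determined by `H`, as the maximum distance from `H`
to a point of `C`. -/
def width (H C : Set (Pt d)) : ℝ := sSup ((fun c => distPS c H) '' C)

/-- The width of `C` determined by `H`, as the distance from `H` to a farthest
supporting hyperplane of `C` ultraparallel to `H`. -/
def widthUP (H C : Set (Pt d)) : ℝ :=
  sSup {r | ∃ J, Supports J C ∧ Ultraparallel H J ∧ distSS H J = r}

/-- The thickness of `C`: the minimum width over supporting hyperplanes. -/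
def thickness (C : Set (Pt d)) : ℝ := sInf {r | ∃ H, Supports H C ∧ width H C = r}

/-- The diameter of `C`. -/
def diam (C : Set (Pt d)) : ℝ := sSup {r | ∃ a ∈ C, ∃ b ∈ C, hdist a b = r}

/-- A body of constant width `δ`. -/
def ConstWidth (W : Set (Pt d)) (δ : ℝ) : Prop :=
  IsBody W ∧ ∀ H, Supports H W → width H W = δ

/-- A complete set of diameter `δ`. -/
def CompleteSet (C : Set (Pt d)) (δ : ℝ) : Prop :=
  diam C = δ ∧ ∀ x, x ∉ C → diam (C ∪ {x}) > δ

/-- A body of constant diameter `δ`. -/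
def ConstDiam (C : Set (Pt d)) (δ : ℝ) : Prop :=
  diam C = δ ∧ ∀ p, IsBdry C p → ∃ p' ∈ C, hdist p p' = δ




/-! ### Auxiliary lemmas -/

variable {d : ℕ}
local notation "V" => EuclideanSpace ℝ (Fin (d+1))


lemma mink_comm (x y : V) : mink d x y = mink d y x := by
  simp [mink, mul_comm]

lemma mink_add_left (x y z : V) : mink d (x + y) z = mink d x z + mink d y z := by
  simp [mink, add_mul, Finset.sum_add_distrib]; ring

lemma mink_smul_left (a : ℝ) (x y : V) : mink d (a • x) y = a * mink d x y := by
  simp [mink, Finset.mul_sum, mul_assoc, mul_sub]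

lemma mink_sub_left (x y z : V) : mink d (x - y) z = mink d x z - mink d y z := by
  simp [mink, sub_mul, Finset.sum_sub_distrib]; ring

lemma mink_neg_left (x y : V) : mink d (-x) y = -mink d x y := by
  simp [mink]; ring

/-- spatial part -/
def sp (x y : V) : ℝ := ∑ i : Fin d, x i.castSucc * y i.castSucc

lemma mink_eq_sp (x y : V) : mink d x y = sp x y - x (Fin.last d) * y (Fin.last d) := rfl

lemma sp_self_nonneg (x : V) : 0 ≤ sp x x :=
  Finset.sum_nonneg fun i _ => mul_self_nonneg _

lemma sp_cs (x y : V) : (sp x y)^2 ≤ sp x x * sp y y := by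
  have := Finset.sum_mul_sq_le_sq_mul_sq Finset.univ
    (fun i : Fin d => x i.castSucc) (fun i : Fin d => y i.castSucc)
  simpa [sp, pow_two, mul_pow] using this

/-- reverse Cauchy-Schwarz -/
lemma revCS {x y : V} {s t : ℝ} (hx : mink d x x = -s^2) (hy : mink d y y = -t^2)
    (hs : 0 < s) (ht : 0 < t) (hxL : 0 < x (Fin.last d)) (hyL : 0 < y (Fin.last d)) :
    mink d x y ≤ -(s*t) := by
  have hsx : sp x x = x (Fin.last d)^2 - s^2 := by
    have := mink_eq_sp x x; nlinarith [this]
  have hsy : sp y y = y (Fin.last d)^2 - t^2 := by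
    have := mink_eq_sp y y; nlinarith [this]
  have hcs := sp_cs x y
  have hxs : s ≤ x (Fin.last d) := by nlinarith [sp_self_nonneg x]
  have hyt : t ≤ y (Fin.last d) := by nlinarith [sp_self_nonneg y]
  rw [mink_eq_sp]
  set a := x (Fin.last d)
  set b := y (Fin.last d)
  set P := sp x y with hP
  have h1 : P^2 ≤ (a*b - s*t)^2 := by nlinarith [sq_nonneg (a*t - s*b)]
  have h2 : 0 ≤ a*b - s*t := by nlinarith
  have h3 : P ≤ a*b - s*t := by
    by_contra hcon
    push_neg at hcon
    nlinarith [mul_pos (sub_pos.2 hcon) (by linarith : (0:ℝ) < P + (a*b - s*t))]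
  linarith

/-- if x is upper timelike and mink x y < 0 for timelike y, then y is upper -/
lemma upper_of_mink_neg {x y : V} {s t : ℝ} (hx : mink d x x = -s^2) (hy : mink d y y = -t^2)
    (hs : 0 < s) (ht : 0 < t) (hxL : 0 < x (Fin.last d)) (hxy : mink d x y < 0) :
    0 < y (Fin.last d) := by
  rcases lt_trichotomy (y (Fin.last d)) 0 with h | h | h
  · exfalso
    have hyy : mink d (-y) (-y) = mink d y y := by simp [mink]; try ring
    have hyneg : mink d (-y) (-y) = -t^2 := by rw [hyy]; exact hy
    have : mink d x (-y) ≤ -(s*t) := by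
      refine revCS hx hyneg hs ht hxL ?_
      show 0 < (-y) (Fin.last d)
      simp only [PiLp.neg_apply]; linarith
    have : mink d x (-y) = - mink d x y := by simp [mink]; ring
    nlinarith [mul_pos hs ht]
  · exfalso
    have := mink_eq_sp y y
    rw [h] at this
    nlinarith [sp_self_nonneg y, sq_nonneg t]
  · exact h

/-- positive semidefiniteness of the orthogonal complement of an upper timelike vector -/
lemma perp_nonneg {w z : V} {s : ℝ} (hw : mink d w w = -s^2) (hs : 0 < s)
    (hwL : 0 < w (Fin.last d)) (hz : mink d w z = 0) : 0 ≤ mink d z z := by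
  have hsw : sp w w = w (Fin.last d)^2 - s^2 := by
    have := mink_eq_sp w w; nlinarith [this]
  have hspz : sp w z = w (Fin.last d) * z (Fin.last d) := by
    have := mink_eq_sp w z; nlinarith [this]
  have hcs := sp_cs w z
  have hcs' : (w (Fin.last d) * z (Fin.last d))^2 ≤ (w (Fin.last d)^2 - s^2) * sp z z := by
    rw [hspz, hsw] at hcs; exact hcs
  rw [mink_eq_sp]
  nlinarith [mul_nonneg (mul_nonneg hs.le hs.le) (sp_self_nonneg z), mul_pos hwL hwL,
    sp_self_nonneg z]

/-- strict version -/
lemma perp_pos {w z : V} {s : ℝ} (hw : mink d w w = -s^2) (hs : 0 < s)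
    (hwL : 0 < w (Fin.last d)) (hz : mink d w z = 0) (hz0 : z ≠ 0) : 0 < mink d z z := by
  have hsw : sp w w = w (Fin.last d)^2 - s^2 := by
    have := mink_eq_sp w w; nlinarith [this]
  have hspz : sp w z = w (Fin.last d) * z (Fin.last d) := by
    have := mink_eq_sp w z; nlinarith [this]
  have hcs := sp_cs w z
  have hzsp : 0 < sp z z := by
    rcases (sp_self_nonneg z).lt_or_eq with h | h
    · exact h
    · exfalso
      -- sp z z = 0 means all spatial coords are 0
      have hall : ∀ i : Fin d, z i.castSucc = 0 := by
        intro i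
        have h1 : ∑ i : Fin d, z i.castSucc * z i.castSucc = 0 := h.symm
        have := Finset.sum_eq_zero_iff_of_nonneg (fun i _ => mul_self_nonneg (z i.castSucc)) |>.mp h1 i (Finset.mem_univ i)
        nlinarith [this]
      have hlz : z (Fin.last d) = 0 := by
        have : sp w z = 0 := Finset.sum_eq_zero fun i _ => by rw [hall i]; ring
        rw [this] at hspz
        have := hwL.ne'
        field_simp at hspz
        exact (mul_eq_zero.1 hspz.symm).resolve_left this
      apply hz0
      ext j
      rcases Fin.eq_castSucc_or_eq_last j with ⟨i, rfl⟩ | rfl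
      · exact hall i
      · exact hlz
  have hcs' : (w (Fin.last d) * z (Fin.last d))^2 ≤ (w (Fin.last d)^2 - s^2) * sp z z := by
    rw [hspz, hsw] at hcs; exact hcs
  rw [mink_eq_sp]
  nlinarith [mul_pos (mul_pos hs hs) hzsp, mul_pos hwL hwL]


lemma arcosh_one : arcosh 1 = 0 := by simp [arcosh]

lemma sqrt_sq_sub_one_lt {x : ℝ} (hx : 1 ≤ x) : Real.sqrt (x^2 - 1) < x := by
  rw [show x = Real.sqrt (x^2) by rw [Real.sqrt_sq (by linarith)]]
  have h1 : x^2 - 1 < x^2 := by nlinarith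
  calc Real.sqrt (Real.sqrt (x ^ 2) ^ 2 - 1) < Real.sqrt (x^2) := by
        rw [Real.sqrt_sq (by linarith)]
        exact (Real.sqrt_lt' (by linarith)).2 (by nlinarith)

lemma arcosh_arg_pos {x : ℝ} (hx : 1 ≤ x) : 0 < x + Real.sqrt (x^2 - 1) := by
  have := Real.sqrt_nonneg (x^2 - 1); linarith

lemma arcosh_nonneg {x : ℝ} (hx : 1 ≤ x) : 0 ≤ arcosh x := by
  apply Real.log_nonneg
  have := Real.sqrt_nonneg (x^2 - 1); linarith

lemma arcosh_le_arcosh {x y : ℝ} (hx : 1 ≤ x) (hxy : x ≤ y) : arcosh x ≤ arcosh y := by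
  apply Real.log_le_log (arcosh_arg_pos hx)
  have : Real.sqrt (x^2 - 1) ≤ Real.sqrt (y^2 - 1) := by
    apply Real.sqrt_le_sqrt; nlinarith
  linarith

lemma cosh_arcosh {x : ℝ} (hx : 1 ≤ x) : Real.cosh (arcosh x) = x := by
  have hpos := arcosh_arg_pos hx
  have hsq : Real.sqrt (x^2-1) ^ 2 = x^2 - 1 := Real.sq_sqrt (by nlinarith)
  rw [Real.cosh_eq, arcosh, Real.exp_log hpos, Real.exp_neg, Real.exp_log hpos]
  have hne : x + Real.sqrt (x^2-1) ≠ 0 := hpos.ne'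
  field_simp
  nlinarith [Real.sqrt_nonneg (x^2-1)]

lemma sinh_arcosh {x : ℝ} (hx : 1 ≤ x) : Real.sinh (arcosh x) = Real.sqrt (x^2 - 1) := by
  have hpos := arcosh_arg_pos hx
  have hsq : Real.sqrt (x^2-1) ^ 2 = x^2 - 1 := Real.sq_sqrt (by nlinarith)
  rw [Real.sinh_eq, arcosh, Real.exp_log hpos, Real.exp_neg, Real.exp_log hpos]
  have hne : x + Real.sqrt (x^2-1) ≠ 0 := hpos.ne'
  field_simp
  nlinarith [Real.sqrt_nonneg (x^2-1)]

lemma arcosh_cosh {t : ℝ} (ht : 0 ≤ t) : arcosh (Real.cosh t) = t := by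
  have h1 : Real.cosh t ^ 2 - 1 = Real.sinh t ^ 2 := by
    have := Real.cosh_sq t; linarith
  rw [arcosh, h1, Real.sqrt_sq (by rw [← Real.sinh_zero]; exact Real.sinh_le_sinh.2 ht), Real.cosh_add_sinh, Real.log_exp]

lemma arcosh_sqrt_one_add_sq {x : ℝ} (hx : 0 ≤ x) :
    arcosh (Real.sqrt (1 + x^2)) = Real.arsinh x := by
  have h1 : Real.sqrt (1 + x^2) ^ 2 - 1 = x^2 := by
    rw [Real.sq_sqrt (by positivity)]; ring
  rw [arcosh, h1, Real.sqrt_sq hx, Real.arsinh, add_comm]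

lemma one_le_sqrt_one_add_sq (x : ℝ) : 1 ≤ Real.sqrt (1 + x^2) := by
  have := Real.sqrt_le_sqrt (show (1:ℝ) ≤ 1 + x^2 by nlinarith)
  simpa using this

lemma arcosh_add_arcosh {A B C : ℝ} (hA : 1 ≤ A) (hB : 1 ≤ B)
    (hC : C = A * B + Real.sqrt (A^2-1) * Real.sqrt (B^2-1)) :
    arcosh A + arcosh B = arcosh C := by
  have ha := Real.sqrt_nonneg (A^2-1)
  have hb := Real.sqrt_nonneg (B^2-1)
  have ha2 : Real.sqrt (A^2-1)^2 = A^2-1 := Real.sq_sqrt (by nlinarith)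
  have hb2 : Real.sqrt (B^2-1)^2 = B^2-1 := Real.sq_sqrt (by nlinarith)
  have hC1 : 1 ≤ C := by nlinarith
  have hkey : Real.sqrt (C^2 - 1) = A * Real.sqrt (B^2-1) + B * Real.sqrt (A^2-1) := by
    rw [show C^2 - 1 = (A * Real.sqrt (B^2-1) + B * Real.sqrt (A^2-1))^2 by nlinarith]
    exact Real.sqrt_sq (by nlinarith)
  rw [arcosh, arcosh, arcosh, hkey, ← Real.log_mul (arcosh_arg_pos hA).ne' (arcosh_arg_pos hB).ne']
  congr 1
  nlinarith



/-! ### Point and distance lemmas -/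

lemma mink_smul_right (a : ℝ) (x y : V) : mink d x (a • y) = a * mink d x y := by
  rw [mink_comm, mink_smul_left, mink_comm]

lemma mink_add_right (x y z : V) : mink d x (y + z) = mink d x y + mink d x z := by
  rw [mink_comm, mink_add_left, mink_comm x y, mink_comm x z]

lemma mink_sub_right (x y z : V) : mink d x (y - z) = mink d x y - mink d x z := by
  rw [mink_comm, mink_sub_left, mink_comm x y, mink_comm x z]

lemma mink_comb_left (a b : ℝ) (x y z : V) :
    mink d (a • x + b • y) z = a * mink d x z + b * mink d y z := by
  rw [mink_add_left, mink_smul_left, mink_smul_left]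

lemma mink_comb_right (a b : ℝ) (x y z : V) :
    mink d x (a • y + b • z) = a * mink d x y + b * mink d x z := by
  rw [mink_add_right, mink_smul_right, mink_smul_right]

lemma pt_mink_self (p : Pt d) : mink d p.1 p.1 = -1 := p.2.1
lemma pt_last_pos (p : Pt d) : 0 < p.1 (Fin.last d) := p.2.2
lemma pt_mink_self' (p : Pt d) : mink d p.1 p.1 = -(1:ℝ)^2 := by rw [p.2.1]; norm_num

lemma pt_last_ge_one (p : Pt d) : 1 ≤ p.1 (Fin.last d) := by
  have h := mink_eq_sp p.1 p.1
  have h2 := sp_self_nonneg (d := d) p.1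
  nlinarith [pt_last_pos p, p.2.1]

lemma neg_mink_ge_one (p q : Pt d) : 1 ≤ -(mink d p.1 q.1) := by
  have := revCS (pt_mink_self' p) (pt_mink_self' q) one_pos one_pos (pt_last_pos p) (pt_last_pos q)
  linarith

lemma hdist_eq (p q : Pt d) : hdist p q = arcosh (-(mink d p.1 q.1)) := rfl
lemma hdist_nonneg (p q : Pt d) : 0 ≤ hdist p q := arcosh_nonneg (neg_mink_ge_one p q)
lemma hdist_comm (p q : Pt d) : hdist p q = hdist q p := by
  unfold hdist; rw [mink_comm]
lemma hdist_self (p : Pt d) : hdist p p = 0 := by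
  unfold hdist; rw [p.2.1]; norm_num [arcosh_one]

lemma plane_mem {v : V} {p : Pt d} (h : p ∈ plane v) : mink d v p.1 = 0 := h

/-! ### Distance to a hyperplane -/

lemma dist_plane_formula {v : V} (hv : mink d v v = 1) (p : Pt d) :
    distPS p (plane v) = Real.arsinh |mink d v p.1| := by
  set σ := mink d v p.1 with hσ
  set c := Real.sqrt (1 + σ^2) with hc
  have hc1 : 1 ≤ c := one_le_sqrt_one_add_sq σ
  have hc0 : 0 < c := by linarith
  have hc2 : c^2 = 1 + σ^2 := Real.sq_sqrt (by positivity)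
  set y : EuclideanSpace ℝ (Fin (d+1)) := p.1 - σ • v with hy
  have hpv : mink d p.1 v = σ := by rw [mink_comm]
  have hyy : mink d y y = -c^2 := by
    rw [hy]
    simp only [mink_sub_left, mink_sub_right, mink_smul_left, mink_smul_right, p.2.1, hv, hpv,
      ← hσ]
    nlinarith
  have hpy : mink d p.1 y = -c^2 := by
    rw [hy]
    simp only [mink_sub_right, mink_smul_right, p.2.1, hpv]
    nlinarith
  have hyL : 0 < y (Fin.last d) := by
    refine upper_of_mink_neg (pt_mink_self' p) hyy one_pos hc0 (pt_last_pos p) ?_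
    rw [hpy]; nlinarith
  have hvy : mink d v y = 0 := by
    rw [hy]
    simp only [mink_sub_right, mink_smul_right, hv, ← hσ]; ring
  -- the foot point
  have hfm : mink d (c⁻¹ • y) (c⁻¹ • y) = -1 := by
    rw [mink_smul_left, mink_smul_right, hyy]
    field_simp
  have hfL : 0 < (c⁻¹ • y) (Fin.last d) := by
    have : (c⁻¹ • y) (Fin.last d) = c⁻¹ * y (Fin.last d) := rfl
    rw [this]; positivity
  set h : Pt d := ⟨c⁻¹ • y, hfm, hfL⟩ with hh
  have hhp : h ∈ plane v := by
    show mink d v (c⁻¹ • y) = 0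
    rw [mink_smul_right, hvy]; ring
  have harc : arcosh c = Real.arsinh |σ| := by
    have : c = Real.sqrt (1 + |σ|^2) := by rw [hc, sq_abs]
    rw [this, arcosh_sqrt_one_add_sq (abs_nonneg σ)]
  have hdph : hdist p h = Real.arsinh |σ| := by
    rw [hdist_eq, ← harc]
    congr 1
    show -(mink d p.1 (c⁻¹ • y)) = c
    rw [mink_smul_right, hpy]
    field_simp
  -- lower bound for all points of the plane
  have hlow : ∀ k : Pt d, k ∈ plane v → Real.arsinh |σ| ≤ hdist p k := by
    intro k hk
    have hyk : mink d y k.1 ≤ -(c * 1) :=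
      revCS hyy (pt_mink_self' k) hc0 one_pos hyL (pt_last_pos k)
    have hpk : mink d p.1 k.1 = mink d y k.1 := by
      have : p.1 = y + σ • v := by rw [hy]; abel
      rw [this, mink_add_left, mink_smul_left, plane_mem hk]; ring
    rw [hdist_eq, ← harc]
    apply arcosh_le_arcosh hc1
    rw [hpk]; linarith
  -- combine
  unfold distPS
  apply le_antisymm
  · refine csInf_le ⟨0, ?_⟩ ⟨h, hhp, hdph⟩
    rintro r ⟨k, _, rfl⟩
    exact hdist_nonneg p k
  · refine le_csInf ⟨_, ⟨h, hhp, rfl⟩⟩ ?_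
    rintro r ⟨k, hk, rfl⟩
    exact hlow k hk


/-! ### Convex combinations on the hyperboloid -/

set_option maxHeartbeats 1000000 in
lemma comb_mem {Z : Set (Pt d)} (hZ : IsConvexSet Z) {a b : Pt d} (ha : a ∈ Z) (hb : b ∈ Z)
    {lam : ℝ} (h0 : 0 ≤ lam) (h1 : lam ≤ 1) :
    ∃ (mu : ℝ) (p : Pt d), 1 ≤ mu ∧ p ∈ Z ∧ lam • a.1 + (1 - lam) • b.1 = mu • p.1 := by
  set γ : ℝ := -(mink d a.1 b.1) with hγ
  have hγ1 : 1 ≤ γ := neg_mink_ge_one a b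
  set m : EuclideanSpace ℝ (Fin (d+1)) := lam • a.1 + (1 - lam) • b.1 with hm
  have hmba : mink d b.1 a.1 = -γ := by rw [mink_comm]; simp [hγ]
  have hmab : mink d a.1 b.1 = -γ := by simp [hγ]
  have hmm : mink d m m = -(lam^2 + (1-lam)^2 + 2*lam*(1-lam)*γ) := by
    rw [hm, mink_comb_left, mink_comb_right, mink_comb_right, a.2.1, b.2.1, hmab, hmba]
    ring
  set μ : ℝ := Real.sqrt (lam^2 + (1-lam)^2 + 2*lam*(1-lam)*γ) with hμ
  have hq1 : 1 ≤ lam^2 + (1-lam)^2 + 2*lam*(1-lam)*γ := by nlinarith [mul_nonneg h0 (by linarith : (0:ℝ) ≤ 1 - lam)]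
  have hμ2 : μ^2 = lam^2 + (1-lam)^2 + 2*lam*(1-lam)*γ := Real.sq_sqrt (by linarith)
  have hμnn : 0 ≤ μ := Real.sqrt_nonneg _
  have hμ1 : 1 ≤ μ := by nlinarith
  have hμ0 : 0 < μ := by linarith
  have hmm' : mink d m m = -μ^2 := by rw [hmm, hμ2]
  have hmL : 0 < m (Fin.last d) := by
    have hma := pt_last_ge_one a
    have hmb := pt_last_ge_one b
    have : m (Fin.last d) = lam * a.1 (Fin.last d) + (1-lam) * b.1 (Fin.last d) := by
      rw [hm]; rfl
    rw [this]; nlinarith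
  have hpm : mink d (μ⁻¹ • m) (μ⁻¹ • m) = -1 := by
    rw [mink_smul_left, mink_smul_right, hmm']
    field_simp
  have hpL : 0 < (μ⁻¹ • m) (Fin.last d) := by
    have : (μ⁻¹ • m) (Fin.last d) = μ⁻¹ * m (Fin.last d) := rfl
    rw [this]; positivity
  set p : Pt d := ⟨μ⁻¹ • m, hpm, hpL⟩ with hp
  have hscal : m = μ • p.1 := by
    rw [hp, smul_smul]
    rw [mul_inv_cancel₀ hμ0.ne', one_smul]
  refine ⟨μ, p, hμ1, ?_, hscal⟩
  -- p ∈ seg a b hence in Z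
  apply hZ a ha b hb
  show hdist a p + hdist p b = hdist a b
  have hA : -(mink d a.1 p.1) = (lam + (1-lam)*γ)/μ := by
    show -(mink d a.1 (μ⁻¹ • m)) = _
    rw [mink_smul_right, hm, mink_comb_right, a.2.1, hmab]
    field_simp
    try ring
  have hB : -(mink d p.1 b.1) = ((1-lam) + lam*γ)/μ := by
    show -(mink d (μ⁻¹ • m) b.1) = _
    rw [mink_smul_left, hm, mink_comb_left, b.2.1, hmab]
    field_simp
    try ring
  set A : ℝ := (lam + (1-lam)*γ)/μ with hAdef
  set B : ℝ := ((1-lam) + lam*γ)/μ with hBdef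
  have hA1 : 1 ≤ A := by rw [← hA]; exact neg_mink_ge_one a p
  have hB1 : 1 ≤ B := by rw [← hB]; exact neg_mink_ge_one p b
  have hg0 : 0 ≤ γ^2 - 1 := by nlinarith
  have hsg := Real.sqrt_nonneg (γ^2-1)
  have hsg2 : Real.sqrt (γ^2-1)^2 = γ^2-1 := Real.sq_sqrt hg0
  have hμne : μ ≠ 0 := hμ0.ne'
  have hexpA : A^2 - 1 = ((1-lam) * Real.sqrt (γ^2-1) / μ)^2 := by
    have : ((1-lam) * Real.sqrt (γ^2-1) / μ)^2 = (1-lam)^2 * (γ^2-1) / μ^2 := by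
      rw [div_pow, mul_pow, hsg2]
    rw [this, hAdef, div_pow]
    rw [div_sub_one (pow_ne_zero 2 hμne), div_eq_div_iff (pow_ne_zero 2 hμne) (pow_ne_zero 2 hμne)]
    rw [hμ2]; ring
  have hexpB : B^2 - 1 = (lam * Real.sqrt (γ^2-1) / μ)^2 := by
    have : (lam * Real.sqrt (γ^2-1) / μ)^2 = lam^2 * (γ^2-1) / μ^2 := by
      rw [div_pow, mul_pow, hsg2]
    rw [this, hBdef, div_pow]
    rw [div_sub_one (pow_ne_zero 2 hμne), div_eq_div_iff (pow_ne_zero 2 hμne) (pow_ne_zero 2 hμne)]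
    rw [hμ2]; ring
  have hsqA : Real.sqrt (A^2 - 1) = (1-lam) * Real.sqrt (γ^2-1) / μ := by
    rw [hexpA, Real.sqrt_sq (div_nonneg (mul_nonneg (by linarith) hsg) hμnn)]
  have hsqB : Real.sqrt (B^2 - 1) = lam * Real.sqrt (γ^2-1) / μ := by
    rw [hexpB, Real.sqrt_sq (div_nonneg (mul_nonneg h0 hsg) hμnn)]
  have hC : γ = A * B + Real.sqrt (A^2-1) * Real.sqrt (B^2-1) := by
    rw [hsqA, hsqB, hAdef, hBdef]
    rw [div_mul_div_comm, div_mul_div_comm, ← add_div]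
    rw [eq_div_iff (by nlinarith [hμ2] : μ * μ ≠ 0)]
    nlinarith [hsg2, hμ2]
  show arcosh (-(mink d a.1 p.1)) + arcosh (-(mink d p.1 b.1)) = arcosh (-(mink d a.1 b.1))
  rw [hA, hB, hmab, neg_neg]
  exact arcosh_add_arcosh hA1 hB1 hC

/-- The convex cone over a geodesically convex set. -/
def coneZ (Z : Set (Pt d)) : Set (EuclideanSpace ℝ (Fin (d+1))) :=
  {x | ∃ mu : ℝ, 1 ≤ mu ∧ ∃ p ∈ Z, x = mu • p.1}

lemma coneZ_convex {Z : Set (Pt d)} (hZ : IsConvexSet Z) : Convex ℝ (coneZ Z) := by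
  rintro x ⟨μ₁, hμ₁, p₁, hp₁, rfl⟩ y ⟨μ₂, hμ₂, p₂, hp₂, rfl⟩ a b ha hb hab
  have hs : 1 ≤ a * μ₁ + b * μ₂ := by nlinarith
  have hs0 : 0 < a * μ₁ + b * μ₂ := by linarith
  set s := a * μ₁ + b * μ₂ with hsdef
  set lam := a * μ₁ / s with hlam
  have h0 : 0 ≤ lam := by positivity
  have h1 : lam ≤ 1 := by rw [hlam]; rw [div_le_one hs0]; nlinarith
  obtain ⟨ν, p, hν, hpZ, hcomb⟩ := comb_mem hZ hp₁ hp₂ h0 h1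
  refine ⟨s * ν, by nlinarith, p, hpZ, ?_⟩
  have h1l : 1 - lam = b * μ₂ / s := by rw [hlam]; field_simp; rw [hsdef]; ring
  calc a • μ₁ • p₁.1 + b • μ₂ • p₂.1 = s • (lam • p₁.1 + (1-lam) • p₂.1) := by
        rw [smul_add, smul_smul, smul_smul, smul_smul, smul_smul, hlam, h1l]
        congr 1
        · congr 1; field_simp
        · congr 1; field_simp
    _ = s • (ν • p.1) := by rw [hcomb]
    _ = (s * ν) • p.1 := by rw [smul_smul]


/-! ### Compactness of the lift -/

lemma mink_continuous_right (z : V) : Continuous fun y : V => mink d z y := by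
  unfold mink
  apply Continuous.sub
  · apply continuous_finset_sum
    intro i _
    exact continuous_const.mul ((EuclideanSpace.proj (i.castSucc : Fin (d+1))).continuous)
  · exact (continuous_const.mul ((EuclideanSpace.proj (Fin.last d)).continuous))

lemma mink_continuous_diag : Continuous fun y : V => mink d y y := by
  unfold mink
  apply Continuous.sub
  · apply continuous_finset_sum
    intro i _
    exact ((EuclideanSpace.proj (i.castSucc : Fin (d+1))).continuous).mul
      ((EuclideanSpace.proj (i.castSucc : Fin (d+1))).continuous)
  · exact ((EuclideanSpace.proj (Fin.last d)).continuous).mul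
      ((EuclideanSpace.proj (Fin.last d)).continuous)

lemma continuousAt_arcosh_one : ContinuousAt arcosh 1 := by
  unfold arcosh
  apply ContinuousAt.log
  · exact (continuous_id.add ((continuous_pow 2).sub continuous_const).sqrt).continuousAt
  · norm_num

set_option maxHeartbeats 1000000 in
lemma lift_compact {C : Set (Pt d)} (hbdd : IsBddSet C) (hcl : IsClosedSet C) :
    IsCompact ((fun p : Pt d => p.1) '' C) := by
  rcases Set.eq_empty_or_nonempty C with rfl | ⟨z₀, hz₀⟩
  · simp
  obtain ⟨R, hR⟩ := hbdd
  have hR0 : 0 ≤ R := by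
    have := hR z₀ hz₀ z₀ hz₀
    rw [hdist_self] at this; exact this
  rw [Metric.isCompact_iff_isClosed_bounded]
  constructor
  · -- closedness
    apply IsSeqClosed.isClosed
    intro u x hu hux
    choose c hcC hceq using hu
    have hx1 : mink d x x = -1 := by
      have h1 : Filter.Tendsto (fun n => mink d (u n) (u n)) Filter.atTop (nhds (mink d x x)) :=
        (mink_continuous_diag.tendsto x).comp hux
      have h2 : (fun n => mink d (u n) (u n)) = fun _ => (-1 : ℝ) := by
        funext n; rw [← hceq n]; exact (c n).2.1
      rw [h2] at h1
      exact (tendsto_nhds_unique tendsto_const_nhds h1).symm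
    have hx2 : 1 ≤ x (Fin.last d) := by
      have h1 : Filter.Tendsto (fun n => u n (Fin.last d)) Filter.atTop (nhds (x (Fin.last d))) :=
        ((EuclideanSpace.proj (Fin.last d)).continuous.tendsto x).comp hux
      apply le_of_tendsto_of_tendsto tendsto_const_nhds h1
      filter_upwards with n
      rw [← hceq n]
      exact pt_last_ge_one (c n)
    set p : Pt d := ⟨x, hx1, by linarith⟩ with hp
    have hpC : p ∈ C := by
      apply hcl
      intro ε hε
      have h1 : Filter.Tendsto (fun n => -(mink d x (u n))) Filter.atTop (nhds 1) := by
        have := ((mink_continuous_right x).tendsto x).comp hux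
        rw [hx1] at this
        simpa using this.neg
      have h2 : Filter.Tendsto (fun n => arcosh (-(mink d x (u n)))) Filter.atTop (nhds 0) := by
        have := continuousAt_arcosh_one.tendsto.comp h1
        rwa [arcosh_one] at this
      rw [Metric.tendsto_atTop] at h2
      obtain ⟨N, hN⟩ := h2 ε hε
      refine ⟨c N, hcC N, ?_⟩
      have := hN N le_rfl
      rw [Real.dist_eq, sub_zero] at this
      have habs : arcosh (-(mink d x (u N))) < ε := lt_of_abs_lt this
      show arcosh (-(mink d p.1 (c N).1)) < ε
      rw [show (c N).1 = u N from hceq N]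
      exact habs
    exact ⟨p, hpC, rfl⟩
  · -- boundedness
    set a := z₀.1 (Fin.last d) with ha
    have ha1 : 1 ≤ a := pt_last_ge_one z₀
    set s := Real.sqrt (a^2 - 1) with hs
    have hs0 : 0 ≤ s := Real.sqrt_nonneg _
    have hs2 : s^2 = a^2 - 1 := Real.sq_sqrt (by nlinarith)
    set M := Real.cosh R * (a + s) with hM
    have hM0 : 0 ≤ M := by
      have := Real.cosh_pos (x := R)
      positivity
    apply Bornology.IsBounded.subset (Metric.isBounded_closedBall (x := (0 : V))
      (r := Real.sqrt 2 * M))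
    rintro x ⟨q, hqC, rfl⟩
    rw [Metric.mem_closedBall, dist_zero_right]
    -- bound on -mink z₀ q
    have hD1 : 1 ≤ -(mink d z₀.1 q.1) := neg_mink_ge_one z₀ q
    have hDR : -(mink d z₀.1 q.1) ≤ Real.cosh R := by
      have harc : arcosh (-(mink d z₀.1 q.1)) ≤ R := hR z₀ hz₀ q hqC
      calc -(mink d z₀.1 q.1) = Real.cosh (arcosh (-(mink d z₀.1 q.1))) := (cosh_arcosh hD1).symm
        _ ≤ Real.cosh R := by
            rw [Real.cosh_le_cosh, abs_of_nonneg (arcosh_nonneg hD1), abs_of_nonneg hR0]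
            exact harc
    -- bound on the last coordinate
    have hqL1 : 1 ≤ q.1 (Fin.last d) := pt_last_ge_one q
    set b := q.1 (Fin.last d) with hb
    have hsz : sp z₀.1 z₀.1 = a^2 - 1 := by
      have := mink_eq_sp z₀.1 z₀.1
      nlinarith [z₀.2.1]
    have hsq : sp q.1 q.1 = b^2 - 1 := by
      have := mink_eq_sp q.1 q.1
      nlinarith [q.2.1]
    have hcs := sp_cs z₀.1 q.1
    have hP : sp z₀.1 q.1 ≤ s * b := by
      rcases le_or_gt (sp z₀.1 q.1) 0 with h | h
      · nlinarith
      · have h1 : sp z₀.1 q.1 ^2 ≤ (s*b)^2 := by nlinarith [hcs]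
        nlinarith [h1, mul_nonneg hs0 (by linarith : (0:ℝ) ≤ b)]
    have hbM : b ≤ M := by
      have h1 : b * (a - s) ≤ -(mink d z₀.1 q.1) := by
        have := mink_eq_sp z₀.1 q.1
        nlinarith
      have h2 : (a - s) * (a + s) = 1 := by nlinarith
      have h3 : 0 < a + s := by linarith
      have h4 : 0 < a - s := by nlinarith
      rw [hM]
      calc b = b * ((a-s)*(a+s)) := by rw [h2]; ring
        _ = (b * (a-s)) * (a+s) := by ring
        _ ≤ Real.cosh R * (a+s) := by
            apply mul_le_mul_of_nonneg_right _ h3.le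
            linarith
    have hM1 : 1 ≤ M := le_trans hqL1 hbM
    -- norm bound
    have hnorm : ‖q.1‖ ≤ Real.sqrt 2 * M := by
      rw [EuclideanSpace.norm_eq]
      have h1 : ∀ i : Fin (d+1), ‖q.1 i‖^2 = q.1 i * q.1 i := by
        intro i; rw [Real.norm_eq_abs, sq_abs]; ring
      have hsum : ∑ i : Fin (d+1), ‖q.1 i‖^2 = sp q.1 q.1 + b * b := by
        simp_rw [h1]
        rw [Fin.sum_univ_castSucc]
        rfl
      rw [hsum, hsq]
      calc Real.sqrt (b^2 - 1 + b * b) ≤ Real.sqrt (2 * M^2) := by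
            apply Real.sqrt_le_sqrt; nlinarith
        _ = Real.sqrt 2 * M := by
            rw [Real.sqrt_mul (by norm_num), Real.sqrt_sq (by linarith)]
    exact hnorm


/-! ### Separation -/

lemma clm_eq_sum (f : V →L[ℝ] ℝ) (x : V) :
    f x = ∑ j, x j * f (EuclideanSpace.single j 1) := by
  have hx : x = ∑ j, x j • EuclideanSpace.single j (1:ℝ) := by
    ext j
    rw [WithLp.ofLp_sum, Finset.sum_apply]
    simp [EuclideanSpace.single_apply]
  conv_lhs => rw [hx]
  rw [map_sum]
  simp [smul_eq_mul]

lemma mink_zero_left (x : V) : mink d 0 x = 0 := by simp [mink]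

set_option maxHeartbeats 1000000 in
lemma separation {Z : Set (Pt d)} (hZconv : IsConvexSet Z) (hbdd : IsBddSet Z)
    (hcl : IsClosedSet Z) (hne : Z.Nonempty) {w : Pt d} (hw : w ∉ Z) :
    ∃ v₀ : EuclideanSpace ℝ (Fin (d+1)), mink d v₀ v₀ = 1 ∧ mink d v₀ w.1 = 0 ∧
      ∀ c ∈ Z, mink d v₀ c.1 < 0 := by
  set LZ := (fun p : Pt d => p.1) '' Z with hLZ
  have hLZcompact : IsCompact LZ := lift_compact hbdd hcl
  have hLZconvA : Convex ℝ (coneZ Z) := coneZ_convex hZconv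
  -- the cone is closed
  set C₀ : Set (EuclideanSpace ℝ (Fin (d+1))) :=
    {x | mink d x x ≤ -1 ∧ 1 ≤ x (Fin.last d)} with hC₀
  have hC₀closed : IsClosed C₀ := by
    apply IsClosed.inter
    · exact isClosed_Iic.preimage mink_continuous_diag
    · exact isClosed_Ici.preimage (EuclideanSpace.proj (Fin.last d)).continuous
  set Φ : EuclideanSpace ℝ (Fin (d+1)) → EuclideanSpace ℝ (Fin (d+1)) :=
    fun x => (Real.sqrt (-(mink d x x)))⁻¹ • x with hΦ
  have hΦcont : ContinuousOn Φ C₀ := by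
    apply ContinuousOn.fun_smul _ continuous_id.continuousOn
    apply ContinuousOn.inv₀
    · exact (mink_continuous_diag.neg.sqrt).continuousOn
    · intro x hx
      have h1 : (1:ℝ) ≤ -(mink d x x) := by have := hx.1; linarith
      have : (1:ℝ) ≤ Real.sqrt (-(mink d x x)) := by
        rw [show (1:ℝ) = Real.sqrt 1 by simp]
        exact Real.sqrt_le_sqrt h1
      linarith
  have hAeq : coneZ Z = C₀ ∩ Φ ⁻¹' LZ := by
    ext x
    constructor
    · rintro ⟨μ, hμ, p, hp, rfl⟩
      have hμ0 : 0 < μ := by linarith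
      have h1 : mink d (μ • p.1) (μ • p.1) = -μ^2 := by
        rw [mink_smul_left, mink_smul_right, p.2.1]; ring
      have h2 : (μ • p.1) (Fin.last d) = μ * p.1 (Fin.last d) := rfl
      refine ⟨⟨by nlinarith, by rw [h2]; nlinarith [pt_last_ge_one p]⟩, ?_⟩
      show Φ (μ • p.1) ∈ LZ
      rw [hΦ]
      simp only
      rw [h1, neg_neg, Real.sqrt_sq hμ0.le, smul_smul, inv_mul_cancel₀ hμ0.ne', one_smul]
      exact ⟨p, hp, rfl⟩
    · rintro ⟨⟨hx1, hx2⟩, hx3⟩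
      obtain ⟨p, hp, hpeq⟩ := hx3
      have hμ1 : 1 ≤ Real.sqrt (-(mink d x x)) := by
        rw [show (1:ℝ) = Real.sqrt 1 by simp]
        exact Real.sqrt_le_sqrt (by linarith)
      have hμ0 : (0:ℝ) < Real.sqrt (-(mink d x x)) := by linarith
      refine ⟨Real.sqrt (-(mink d x x)), hμ1, p, hp, ?_⟩
      have hpeq' : p.1 = Φ x := hpeq
      rw [hpeq', hΦ]
      simp only
      rw [smul_smul, mul_inv_cancel₀ hμ0.ne', one_smul]
  have hAclosed : IsClosed (coneZ Z) := by
    rw [hAeq]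
    exact hΦcont.preimage_isClosed_of_isClosed hC₀closed hLZcompact.isClosed
  -- a compact convex neighborhood of the lift inside the cone
  obtain ⟨K, hK⟩ := (Metric.isBounded_iff_subset_closedBall 0).1 hLZcompact.isBounded
  set Q := coneZ Z ∩ Metric.closedBall (0 : EuclideanSpace ℝ (Fin (d+1))) K with hQ
  have hQconv : Convex ℝ Q := hLZconvA.inter (convex_closedBall _ _)
  have hQcompact : IsCompact Q := by
    rw [Metric.isCompact_iff_isClosed_bounded]
    exact ⟨hAclosed.inter Metric.isClosed_closedBall,
      (Metric.isBounded_closedBall).subset Set.inter_subset_right⟩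
  have hLZQ : LZ ⊆ Q := by
    intro x hx
    refine ⟨?_, hK hx⟩
    obtain ⟨p, hp, rfl⟩ := hx
    exact ⟨1, le_refl 1, p, hp, (one_smul _ _).symm⟩
  -- the span of w is disjoint from Q
  set S : Submodule ℝ (EuclideanSpace ℝ (Fin (d+1))) := Submodule.span ℝ {w.1} with hS
  have hdisj : Disjoint Q (S : Set (EuclideanSpace ℝ (Fin (d+1)))) := by
    rw [Set.disjoint_left]
    rintro x ⟨⟨μ, hμ, p, hp, rfl⟩, -⟩ hxS
    obtain ⟨t, ht⟩ := Submodule.mem_span_singleton.1 hxS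
    have hμ0 : 0 < μ := by linarith
    have hL : t * w.1 (Fin.last d) = μ * p.1 (Fin.last d) := by
      have h := congrArg (fun y : EuclideanSpace ℝ (Fin (d+1)) => y (Fin.last d)) ht
      simpa using h
    have ht0 : 0 < t := by
      nlinarith [pt_last_ge_one w, pt_last_ge_one p, pt_last_pos w, pt_last_pos p]
    have hm : mink d (t • w.1) (t • w.1) = mink d (μ • p.1) (μ • p.1) := by rw [ht]
    have hm2 : -t^2 = -μ^2 := by
      rw [mink_smul_left, mink_smul_right, mink_smul_left, mink_smul_right, w.2.1, p.2.1] at hm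
      nlinarith [hm]
    have htμ : t = μ := by nlinarith
    have hpw : p.1 = w.1 := by
      have : μ • w.1 = μ • p.1 := by rw [← htμ, ht, htμ]
      have := smul_right_injective (EuclideanSpace ℝ (Fin (d+1))) hμ0.ne' this
      exact this.symm
    exact hw (by rwa [show w = p from Subtype.ext hpw.symm])
  -- separate
  obtain ⟨f, u, v', hfu, huv, hfv⟩ := geometric_hahn_banach_compact_closed hQconv hQcompact
    S.convex (Submodule.closed_of_finiteDimensional S) hdisj
  have hv'0 : v' < 0 := by
    have := hfv 0 (Submodule.zero_mem S)
    rwa [map_zero] at this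
  have hfw : f w.1 = 0 := by
    by_contra hfw
    have hmem : ((v' - 1)/f w.1) • w.1 ∈ S := Submodule.smul_mem _ _ (Submodule.mem_span_singleton_self _)
    have := hfv _ hmem
    rw [map_smul, smul_eq_mul, div_mul_cancel₀ _ hfw] at this
    linarith
  have hfZ : ∀ c : Pt d, c ∈ Z → f c.1 < 0 := by
    intro c hc
    have : f c.1 < u := hfu c.1 (hLZQ ⟨c, hc, rfl⟩)
    linarith
  -- convert the functional into a vector
  set vv : EuclideanSpace ℝ (Fin (d+1)) :=
    WithLp.toLp 2 (fun j => if j = Fin.last d then -(f (EuclideanSpace.single j 1))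
      else f (EuclideanSpace.single j 1) : ∀ _ : Fin (d+1), ℝ) with hvv
  have hvvf : ∀ x : EuclideanSpace ℝ (Fin (d+1)), mink d vv x = f x := by
    intro x
    rw [clm_eq_sum f x, mink_eq_sp]
    have hlast : vv (Fin.last d) = -(f (EuclideanSpace.single (Fin.last d) 1)) := by
      rw [hvv]; simp
    have hcs : ∀ i : Fin d, vv i.castSucc = f (EuclideanSpace.single i.castSucc 1) := by
      intro i
      rw [hvv]
      simp [(Fin.castSucc_lt_last i).ne]
    rw [Fin.sum_univ_castSucc (f := fun j => x j * f (EuclideanSpace.single j 1))]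
    rw [hlast]
    unfold sp
    rw [Finset.sum_congr rfl (fun i _ => by rw [hcs i, mul_comm])]
    ring
  obtain ⟨c₀, hc₀⟩ := hne
  have hvvne : vv ≠ 0 := by
    intro h
    have := hvvf c₀.1
    rw [h, mink_zero_left] at this
    have := hfZ c₀ hc₀
    linarith [this]
  have hvvw : mink d w.1 vv = 0 := by rw [mink_comm, hvvf]; exact hfw
  have hvvpos : 0 < mink d vv vv :=
    perp_pos (pt_mink_self' w) one_pos (pt_last_pos w) hvvw hvvne
  set r := Real.sqrt (mink d vv vv) with hr
  have hr0 : 0 < r := Real.sqrt_pos.2 hvvpos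
  have hr2 : r^2 = mink d vv vv := Real.sq_sqrt hvvpos.le
  refine ⟨r⁻¹ • vv, ?_, ?_, ?_⟩
  · rw [mink_smul_left, mink_smul_right]
    field_simp
    nlinarith [hr2]
  · rw [mink_smul_left, mink_comm, hvvw]
    ring
  · intro c hc
    rw [mink_smul_left, hvvf]
    exact mul_neg_of_pos_of_neg (by positivity) (hfZ c hc)


/-! ### The pencil of hyperplanes perpendicular to a line -/

/-- normal vector of the hyperplane at parameter `t` of the pencil -/
def planeVec (w v₀ : V) (t : ℝ) : V := Real.sinh t • w + Real.cosh t • v₀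

/-- the "distance from the line times" factor -/
def rhoF (w v₀ x : V) : ℝ := Real.sqrt ((mink d w x)^2 - (mink d v₀ x)^2)

/-- the parameter of the pencil member through `x` -/
def tauF (w v₀ x : V) : ℝ :=
  Real.arsinh (mink d v₀ x / rhoF w v₀ x)

lemma body_nonempty {C : Set (Pt d)} (hC : IsBody C) : C.Nonempty := by
  obtain ⟨p, ε, hε, hp⟩ := hC.2.2.2
  exact ⟨p, hp p (by rw [hdist_self]; exact hε)⟩

section Frame

variable (w : Pt d) (v₀ : EuclideanSpace ℝ (Fin (d+1)))

lemma rhoF_sq_ge_one (hv : mink d v₀ v₀ = 1) (hwv : mink d v₀ w.1 = 0) (p : Pt d) :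
    1 ≤ (mink d w.1 p.1)^2 - (mink d v₀ p.1)^2 := by
  set a := mink d w.1 p.1 with ha
  set β := mink d v₀ p.1 with hβ
  set u : EuclideanSpace ℝ (Fin (d+1)) := a • w.1 + (-β) • v₀ with hu
  set z : EuclideanSpace ℝ (Fin (d+1)) := p.1 + u with hz
  have hwv' : mink d w.1 v₀ = 0 := by rw [mink_comm]; exact hwv
  have hpw : mink d p.1 w.1 = a := by rw [mink_comm]
  have hpv : mink d p.1 v₀ = β := by rw [mink_comm]
  have hwu : mink d w.1 z = 0 := by
    simp only [hz, hu, mink_add_right, mink_smul_right, w.2.1, hwv']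
    rw [← ha]
    ring
  have hzz : mink d z z = -1 + a^2 - β^2 := by
    simp only [hz, hu, mink_add_left, mink_add_right, mink_smul_left, mink_smul_right,
      p.2.1, w.2.1, hv, hwv, hwv', hpw, hpv]
    rw [← ha]
    ring
  have := perp_nonneg (pt_mink_self' w) one_pos (pt_last_pos w) hwu
  rw [hzz] at this
  linarith

lemma rhoF_ge_one (hv : mink d v₀ v₀ = 1) (hwv : mink d v₀ w.1 = 0) (p : Pt d) :
    1 ≤ rhoF w.1 v₀ p.1 := by
  unfold rhoF
  have := Real.sqrt_le_sqrt (rhoF_sq_ge_one w v₀ hv hwv p)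
  simpa using this

lemma planeVec_unit (hv : mink d v₀ v₀ = 1) (hwv : mink d v₀ w.1 = 0) (t : ℝ) :
    mink d (planeVec w.1 v₀ t) (planeVec w.1 v₀ t) = 1 := by
  have hwv' : mink d w.1 v₀ = 0 := by rw [mink_comm]; exact hwv
  unfold planeVec
  rw [mink_comb_left, mink_comb_right, mink_comb_right, w.2.1, hv, hwv, hwv']
  have := Real.cosh_sq t
  nlinarith [this]

lemma mink_planeVec (hv : mink d v₀ v₀ = 1) (hwv : mink d v₀ w.1 = 0) (p : Pt d) (t : ℝ) :
    mink d (planeVec w.1 v₀ t) p.1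
      = rhoF w.1 v₀ p.1 * Real.sinh (tauF w.1 v₀ p.1 - t) := by
  set a := mink d w.1 p.1 with ha
  set β := mink d v₀ p.1 with hβ
  have haneg : a ≤ -1 := by
    have := neg_mink_ge_one w p; rw [← ha] at this; linarith
  set ρ := rhoF w.1 v₀ p.1 with hρ
  have hρ1 : 1 ≤ ρ := rhoF_ge_one w v₀ hv hwv p
  have hρ0 : 0 < ρ := by linarith
  have hρ2 : ρ^2 = a^2 - β^2 := by
    rw [hρ]; unfold rhoF
    exact Real.sq_sqrt (by linarith [rhoF_sq_ge_one w v₀ hv hwv p])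
  have hsinh : Real.sinh (tauF w.1 v₀ p.1) = β / ρ := by
    unfold tauF
    rw [Real.sinh_arsinh, ← hβ, ← hρ]
  have hcosh : Real.cosh (tauF w.1 v₀ p.1) = -a / ρ := by
    unfold tauF
    rw [Real.cosh_arsinh, ← hβ, ← hρ]
    rw [show 1 + (β/ρ)^2 = (-a/ρ)^2 by field_simp; nlinarith]
    exact Real.sqrt_sq (div_nonneg (by linarith) hρ0.le)
  rw [Real.sinh_sub, hsinh, hcosh]
  unfold planeVec
  rw [mink_comb_left, ← ha, ← hβ]
  field_simp
  ring

lemma tauF_self (hv : mink d v₀ v₀ = 1) (hwv : mink d v₀ w.1 = 0) :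
    tauF w.1 v₀ w.1 = 0 := by
  unfold tauF
  rw [hwv, zero_div, Real.arsinh_zero]

lemma tauF_contOn (hv : mink d v₀ v₀ = 1) (hwv : mink d v₀ w.1 = 0) (C : Set (Pt d)) :
    ContinuousOn (tauF w.1 v₀) ((fun p : Pt d => p.1) '' C) := by
  rintro x ⟨p, hp, rfl⟩
  apply ContinuousAt.continuousWithinAt
  apply Real.continuous_arsinh.continuousAt.comp
  apply ContinuousAt.div
  · exact (mink_continuous_right v₀).continuousAt
  · apply Continuous.continuousAt
    apply Real.continuous_sqrt.comp
    exact ((mink_continuous_right w.1).pow 2).sub ((mink_continuous_right v₀).pow 2)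
  · have := rhoF_ge_one w v₀ hv hwv p
    unfold rhoF at this ⊢
    intro h
    rw [h] at this
    linarith

set_option maxHeartbeats 1000000 in
lemma exists_support (hv : mink d v₀ v₀ = 1) (hwv : mink d v₀ w.1 = 0)
    {C : Set (Pt d)} (hC : IsBody C) :
    ∃ t : ℝ, Supports (plane (planeVec w.1 v₀ t)) C ∧
      (∀ c : Pt d, c ∈ C → tauF w.1 v₀ c.1 ≤ t) ∧ (∃ c ∈ C, tauF w.1 v₀ c.1 = t) := by
  obtain ⟨hconv, hbdd, hcl, hint⟩ := hC
  set LC := (fun p : Pt d => p.1) '' C with hLC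
  have hLCcomp : IsCompact LC := lift_compact hbdd hcl
  have hLCne : LC.Nonempty := (body_nonempty ⟨hconv, hbdd, hcl, hint⟩).image _
  have himgcomp : IsCompact (tauF w.1 v₀ '' LC) :=
    hLCcomp.image_of_continuousOn (tauF_contOn w v₀ hv hwv C)
  have himgne : (tauF w.1 v₀ '' LC).Nonempty := hLCne.image _
  set t := sSup (tauF w.1 v₀ '' LC) with ht
  have htmem : t ∈ tauF w.1 v₀ '' LC := himgcomp.sSup_mem himgne
  have htub : ∀ c : Pt d, c ∈ C → tauF w.1 v₀ c.1 ≤ t := by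
    intro c hc
    exact le_csSup himgcomp.bddAbove ⟨c.1, ⟨c, hc, rfl⟩, rfl⟩
  obtain ⟨x, ⟨c₁, hc₁, rfl⟩, hc₁t⟩ := htmem
  refine ⟨t, ⟨⟨planeVec w.1 v₀ t, planeVec_unit w v₀ hv hwv t, rfl⟩, ⟨c₁, ?_, hc₁⟩, ?_⟩,
    htub, ⟨c₁, hc₁, hc₁t⟩⟩
  · -- c₁ is on the plane
    show mink d (planeVec w.1 v₀ t) c₁.1 = 0
    rw [mink_planeVec w v₀ hv hwv, hc₁t, sub_self, Real.sinh_zero, mul_zero]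
  · -- the plane misses the interior
    rintro p ⟨ε, hε, hp⟩ hpH
    have hpt : tauF w.1 v₀ p.1 = t := by
      have h0 : mink d (planeVec w.1 v₀ t) p.1 = 0 := hpH
      rw [mink_planeVec w v₀ hv hwv] at h0
      have hρ1 := rhoF_ge_one w v₀ hv hwv p
      have : Real.sinh (tauF w.1 v₀ p.1 - t) = 0 := by
        rcases mul_eq_zero.1 h0 with h | h
        · linarith
        · exact h
      have : tauF w.1 v₀ p.1 - t = 0 := by
        have h1 := Real.sinh_lt_sinh (x := tauF w.1 v₀ p.1 - t) (y := 0)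
        have h2 := Real.sinh_lt_sinh (x := 0) (y := tauF w.1 v₀ p.1 - t)
        rcases lt_trichotomy (tauF w.1 v₀ p.1 - t) 0 with hc | hc | hc
        · exfalso; have := h1.2 hc; rw [Real.sinh_zero] at this; linarith
        · exact hc
        · exfalso; have := h2.2 hc; rw [Real.sinh_zero] at this; linarith
      linarith
    -- perturbation
    set n := planeVec w.1 v₀ t with hn
    have hnn : mink d n n = 1 := planeVec_unit w v₀ hv hwv t
    have hnp : mink d n p.1 = 0 := hpH
    have hpn : mink d p.1 n = 0 := by rw [mink_comm]; exact hnp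
    set B := |n (Fin.last d)| + 1 with hB
    have hB0 : 0 < B := by positivity
    set s := min (ε/2) (Real.arsinh (1/B)) with hs
    have hs0 : 0 < s := by
      apply lt_min (by linarith)
      rw [Real.arsinh_pos_iff]
      positivity
    have hsinhs : Real.sinh s ≤ 1/B := by
      have : Real.sinh s ≤ Real.sinh (Real.arsinh (1/B)) :=
        Real.sinh_le_sinh.2 (min_le_right _ _)
      rwa [Real.sinh_arsinh] at this
    have hsinhs0 : 0 < Real.sinh s := by
      rw [← Real.sinh_zero]
      exact Real.sinh_lt_sinh.2 hs0
    set γ : EuclideanSpace ℝ (Fin (d+1)) := Real.cosh s • p.1 + Real.sinh s • n with hγ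
    have hγm : mink d γ γ = -1 := by
      rw [hγ, mink_comb_left, mink_comb_right, mink_comb_right, p.2.1, hnn, hnp, hpn]
      have := Real.cosh_sq s
      nlinarith [this]
    have hγL : 0 < γ (Fin.last d) := by
      have hγL' : γ (Fin.last d) = Real.cosh s * p.1 (Fin.last d) + Real.sinh s * n (Fin.last d) := rfl
      rw [hγL']
      have h1 : 1 ≤ Real.cosh s * p.1 (Fin.last d) :=
        one_le_mul_of_one_le_of_one_le (Real.one_le_cosh s) (pt_last_ge_one p)
      have h2 : Real.sinh s * n (Fin.last d) ≥ -(Real.sinh s * |n (Fin.last d)|) := by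
        rw [← mul_neg]
        apply mul_le_mul_of_nonneg_left _ hsinhs0.le
        rw [neg_le]
        exact neg_le_abs _
      have h3 : Real.sinh s * |n (Fin.last d)| < 1 := by
        calc Real.sinh s * |n (Fin.last d)| ≤ (1/B) * |n (Fin.last d)| := by
              apply mul_le_mul_of_nonneg_right hsinhs (abs_nonneg _)
          _ < 1 := by
              rw [div_mul_eq_mul_div, div_lt_one hB0]
              rw [hB]; linarith [abs_nonneg (n (Fin.last d))]
      linarith
    set q : Pt d := ⟨γ, hγm, hγL⟩ with hq
    have hqC : q ∈ C := by
      apply hp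
      show arcosh (-(mink d p.1 γ)) < ε
      have : mink d p.1 γ = -Real.cosh s := by
        rw [hγ, mink_comb_right, p.2.1, hpn]
        ring
      rw [this, neg_neg, arcosh_cosh hs0.le]
      calc s ≤ ε/2 := min_le_left _ _
        _ < ε := by linarith
    have hτq : t < tauF w.1 v₀ q.1 := by
      have h1 : mink d n γ = Real.sinh s := by
        rw [hγ, mink_comb_right, hnn, hnp]
        ring
      have h2 : mink d (planeVec w.1 v₀ t) q.1 = rhoF w.1 v₀ q.1 * Real.sinh (tauF w.1 v₀ q.1 - t) :=
        mink_planeVec w v₀ hv hwv q t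
      have hρ1 := rhoF_ge_one w v₀ hv hwv q
      have h3 : 0 < rhoF w.1 v₀ q.1 * Real.sinh (tauF w.1 v₀ q.1 - t) := by
        rw [← h2]
        show 0 < mink d n q.1
        rw [show q.1 = γ from rfl, h1]
        exact hsinhs0
      have h4 : 0 < Real.sinh (tauF w.1 v₀ q.1 - t) := by
        by_contra hcon
        push_neg at hcon
        nlinarith
      have h5 : 0 < tauF w.1 v₀ q.1 - t := by
        by_contra hcon
        push_neg at hcon
        have := Real.sinh_le_sinh.2 hcon
        rw [Real.sinh_zero] at this
        linarith
      linarith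
    have := htub q hqC
    linarith

end Frame


/-! ### The key monotonicity inequality -/

lemma arsinh_shift {m a h : ℝ} (hm : 1 ≤ m) (ha : 0 ≤ a) (hh : 0 ≤ h) :
    Real.arsinh (m * Real.sinh a) + h ≤ Real.arsinh (m * Real.sinh (a + h)) := by
  have hsa : 0 ≤ Real.sinh a := by rw [← Real.sinh_zero]; exact Real.sinh_le_sinh.2 ha
  have hsh : 0 ≤ Real.sinh h := by rw [← Real.sinh_zero]; exact Real.sinh_le_sinh.2 hh
  have h1 : Real.sqrt (1 + (m*Real.sinh a)^2) ≤ m * Real.cosh a := by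
    rw [show m * Real.cosh a = Real.sqrt ((m*Real.cosh a)^2) from
      (Real.sqrt_sq (by positivity)).symm]
    apply Real.sqrt_le_sqrt
    have h0 := Real.cosh_sq a
    have hm2 : 1 ≤ m^2 := by nlinarith
    nlinarith [mul_nonneg (by linarith : (0:ℝ) ≤ m^2 - 1) (sq_nonneg (Real.sinh a))]
  have h2 : Real.sinh (Real.arsinh (m*Real.sinh a) + h) ≤ m * Real.sinh (a+h) := by
    rw [Real.sinh_add, Real.sinh_arsinh, Real.cosh_arsinh, Real.sinh_add]
    have := mul_le_mul_of_nonneg_right h1 hsh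
    nlinarith
  calc Real.arsinh (m*Real.sinh a) + h
      = Real.arsinh (Real.sinh (Real.arsinh (m*Real.sinh a) + h)) := (Real.arsinh_sinh _).symm
    _ ≤ _ := Real.arsinh_le_arsinh.2 h2

/-- Proposition 4: every body of constant width is reduced. -/
theorem constWidth_reduced {d : ℕ} (W : Set (Pt d)) (δ : ℝ) (hW : ConstWidth W δ) :
    ∀ Z : Set (Pt d), IsBody Z → Z ⊆ W → Z ≠ W → thickness Z < thickness W := by
  intro Z hZ hZW hZneq
  obtain ⟨hZconv, hZbdd, hZcl, hZint⟩ := hZ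
  have hZbody : IsBody Z := ⟨hZconv, hZbdd, hZcl, hZint⟩
  have hZne : Z.Nonempty := body_nonempty hZbody
  obtain ⟨hWconv, hWbdd, hWcl, hWint⟩ := hW.1
  obtain ⟨w, hwW, hwZ⟩ := Set.exists_of_ssubset (hZW.ssubset_of_ne hZneq)
  obtain ⟨v₀, hv, hwv, hsep⟩ := separation hZconv hZbdd hZcl hZne hwZ
  obtain ⟨tZ, hSuppZ, hubZ, c₁, hc₁Z, hc₁t⟩ := exists_support w v₀ hv hwv hZbody
  obtain ⟨tW, hSuppW, hubW, -⟩ := exists_support w v₀ hv hwv hW.1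
  have htZ0 : tZ < 0 := by
    rw [← hc₁t]
    unfold tauF
    rw [Real.arsinh_neg_iff]
    apply div_neg_of_neg_of_pos (hsep c₁ hc₁Z)
    have := rhoF_ge_one w v₀ hv hwv c₁
    linarith
  have htW0 : 0 ≤ tW := by
    have := hubW w hwW
    rwa [tauF_self w v₀ hv hwv] at this
  set gap := tW - tZ with hgap
  have hgap0 : 0 < gap := by linarith
  have hδ : width (plane (planeVec w.1 v₀ tW)) W = δ := hW.2 _ hSuppW
  -- thickness of W equals δ
  have hthW : thickness W = δ := by
    have hset : {r | ∃ H, Supports H W ∧ width H W = r} = {δ} := by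
      ext r
      simp only [Set.mem_setOf_eq, Set.mem_singleton_iff]
      constructor
      · rintro ⟨H, hH, hr⟩
        rw [← hr, hW.2 H hH]
      · rintro rfl
        exact ⟨_, hSuppW, hδ⟩
    rw [thickness, hset, csInf_singleton]
  -- Facts about the plane G supporting W
  have hLWcomp : IsCompact ((fun p : Pt d => p.1) '' W) := lift_compact hWbdd hWcl
  set G := plane (planeVec w.1 v₀ tW) with hGdef
  have hGformula : ∀ c : Pt d, distPS c G = Real.arsinh |mink d (planeVec w.1 v₀ tW) c.1| :=
    fun c => dist_plane_formula (planeVec_unit w v₀ hv hwv tW) c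
  have hbddG : BddAbove ((fun c => distPS c G) '' W) := by
    have himg : ((fun c => distPS c G) '' W) =
        (fun x => Real.arsinh |mink d (planeVec w.1 v₀ tW) x|) '' ((fun p : Pt d => p.1) '' W) := by
      rw [Set.image_image]
      exact Set.image_congr fun c _ => hGformula c
    rw [himg]
    apply IsCompact.bddAbove
    apply hLWcomp.image
    exact Real.continuous_arsinh.comp (mink_continuous_right _).abs
  have hdistG_le : ∀ c : Pt d, c ∈ W → distPS c G ≤ δ := by
    intro c hc
    rw [← hδ]
    exact le_csSup hbddG ⟨c, hc, rfl⟩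
  -- the width of Z at the supporting plane H is at most δ - gap
  set H := plane (planeVec w.1 v₀ tZ) with hHdef
  have hHformula : ∀ c : Pt d, distPS c H = Real.arsinh |mink d (planeVec w.1 v₀ tZ) c.1| :=
    fun c => dist_plane_formula (planeVec_unit w v₀ hv hwv tZ) c
  have hwidthZ : width H Z ≤ δ - gap := by
    unfold width
    apply csSup_le (hZne.image _)
    rintro r ⟨c, hcZ, rfl⟩
    have hρ1 := rhoF_ge_one w v₀ hv hwv c
    have hτZ : tauF w.1 v₀ c.1 ≤ tZ := hubZ c hcZ
    have hτW : tauF w.1 v₀ c.1 ≤ tW := hubW c (hZW hcZ)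
    have hsZ : Real.sinh (tauF w.1 v₀ c.1 - tZ) ≤ 0 := by
      have := Real.sinh_le_sinh.2 (show tauF w.1 v₀ c.1 - tZ ≤ 0 by linarith)
      rwa [Real.sinh_zero] at this
    have hsW : Real.sinh (tauF w.1 v₀ c.1 - tW) ≤ 0 := by
      have := Real.sinh_le_sinh.2 (show tauF w.1 v₀ c.1 - tW ≤ 0 by linarith)
      rwa [Real.sinh_zero] at this
    have e1 : distPS c H = Real.arsinh (rhoF w.1 v₀ c.1 * Real.sinh (tZ - tauF w.1 v₀ c.1)) := by
      rw [hHformula c, mink_planeVec w v₀ hv hwv]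
      congr 1
      rw [abs_of_nonpos (by nlinarith)]
      rw [show tZ - tauF w.1 v₀ c.1 = -(tauF w.1 v₀ c.1 - tZ) by ring, Real.sinh_neg]
      ring
    have e2 : distPS c G = Real.arsinh (rhoF w.1 v₀ c.1 * Real.sinh (tW - tauF w.1 v₀ c.1)) := by
      rw [hGformula c, mink_planeVec w v₀ hv hwv]
      congr 1
      rw [abs_of_nonpos (by nlinarith)]
      rw [show tW - tauF w.1 v₀ c.1 = -(tauF w.1 v₀ c.1 - tW) by ring, Real.sinh_neg]
      ring
    have key := arsinh_shift hρ1 (by linarith : (0:ℝ) ≤ tZ - tauF w.1 v₀ c.1) hgap0.le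
    rw [show tZ - tauF w.1 v₀ c.1 + gap = tW - tauF w.1 v₀ c.1 by rw [hgap]; ring] at key
    have hfin := hdistG_le c (hZW hcZ)
    rw [e2] at hfin
    show distPS c H ≤ δ - gap
    rw [e1]
    linarith
  -- thickness of Z is at most the width at H
  have hthZ : thickness Z ≤ width H Z := by
    apply csInf_le
    · refine ⟨0, ?_⟩
      rintro r ⟨H', hH', rfl⟩
      apply Real.sSup_nonneg
      rintro y ⟨c, hc, rfl⟩
      apply Real.sInf_nonneg
      rintro s ⟨k, hk, rfl⟩
      exact hdist_nonneg c k
    · exact ⟨H, hSuppZ, rfl⟩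
  rw [hthW]
  calc thickness Z ≤ width H Z := hthZ
    _ ≤ δ - gap := hwidthZ
    _ < δ := by linarith

end HypSpace
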